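/- The perimeter of the ellipse with semi-axes 1 and k satisfies per = 4 + 2k² log(1/k) + O(k²) as k → 0⁺; in particular, for every C > 0 there exists k₀ > 0 such that per ≥ 4 + k² log(1/k) for all 0 < k < k₀. -/

import Mathlib

open Real intervalIntegral MeasureTheory

noncomputable def ellF (k t : ℝ) : ℝ := Real.sqrt (Real.sin t ^ 2 + k ^ 2 * Real.cos t ^ 2)

lemma ellF_cont (k : ℝ) : Continuous (ellF k) := by
  unfold ellF
  exact Real.continuous_sqrt.comp (by continuity)

lemma ellF_intg (k a b : ℝ) : IntervalIntegrable (ellF k) volume a b :=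
  (ellF_cont k).intervalIntegrable a b

lemma ellF_add_pi (k t : ℝ) : ellF k (t + π) = ellF k t := by
  simp [ellF, Real.sin_add_pi, Real.cos_add_pi]

lemma ellF_pi_sub (k t : ℝ) : ellF k (π - t) = ellF k t := by
  simp [ellF, Real.sin_pi_sub, Real.cos_pi_sub]

lemma ellF_sym (k : ℝ) :
    ∫ t in (0:ℝ)..(2*π), ellF k t = 4 * ∫ t in (0:ℝ)..(π/2), ellF k t := by
  have h2 : ∫ t in π..(2*π), ellF k t = ∫ t in (0:ℝ)..π, ellF k t := by
    have h := intervalIntegral.integral_comp_add_right (a := (0:ℝ)) (b := π)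
      (fun t => ellF k t) π
    simp only [ellF_add_pi, zero_add] at h
    rw [show (2*π:ℝ) = π + π by ring]
    exact h.symm
  have h3 : ∫ t in (π/2)..π, ellF k t = ∫ t in (0:ℝ)..(π/2), ellF k t := by
    have h := intervalIntegral.integral_comp_sub_left (a := (0:ℝ)) (b := π/2)
      (fun t => ellF k t) π
    simp only [ellF_pi_sub, sub_zero] at h
    rw [show π - π/2 = π/2 by ring] at h
    exact h.symm
  have e1 : ∫ t in (0:ℝ)..(2*π), ellF k t
      = (∫ t in (0:ℝ)..π, ellF k t) + ∫ t in π..(2*π), ellF k t :=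
    (intervalIntegral.integral_add_adjacent_intervals (ellF_intg k 0 π) (ellF_intg k π (2*π))).symm
  have e2 : ∫ t in (0:ℝ)..π, ellF k t
      = (∫ t in (0:ℝ)..(π/2), ellF k t) + ∫ t in (π/2)..π, ellF k t :=
    (intervalIntegral.integral_add_adjacent_intervals (ellF_intg k 0 (π/2))
      (ellF_intg k (π/2) π)).symm
  rw [e1, h2, e2, h3]; ring

-- 1/sin t ≤ 1/t + 1 on (0, π/2]
lemma inv_sin_le {t : ℝ} (ht0 : 0 < t) (ht2 : t ≤ π/2) : 1 / Real.sin t ≤ 1 / t + 1 := by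
  have hs : 0 < Real.sin t := Real.sin_pos_of_pos_of_lt_pi ht0 (by linarith [Real.pi_pos])
  have key : t ≤ Real.sin t * (1 + t) := by
    rcases le_or_gt t 1 with h1 | h1
    · have hc := Real.sin_gt_sub_cube ht0
      nlinarith [sq_nonneg t, pow_pos ht0 3]
    · have hm : Real.sin 1 ≤ Real.sin t :=
        Real.sin_le_sin_of_le_of_le_pi_div_two (by norm_num [Real.pi_pos]; linarith [Real.pi_pos]) ht2 h1.le
      have hc := Real.sin_gt_sub_cube (x := 1) (by norm_num)
      have hpi : t ≤ 3 := by nlinarith [Real.pi_lt_d2]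
      nlinarith
  have h2 : 1 / Real.sin t ≤ (1 + t) / t := by
    rw [div_le_div_iff₀ hs ht0]
    linarith
  calc 1 / Real.sin t ≤ (1 + t) / t := h2
    _ = 1 / t + 1 := by field_simp

-- pointwise upper bound on [k, π/2]
lemma ellF_upper {k t : ℝ} (hk : 0 < k) (ht1 : k ≤ t) (ht2 : t ≤ π/2) :
    ellF k t ≤ Real.sin t + k^2/2 * (1/t + 1) := by
  have ht0 : 0 < t := lt_of_lt_of_le hk ht1
  have hs : 0 < Real.sin t := Real.sin_pos_of_pos_of_lt_pi ht0 (by linarith [Real.pi_pos])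
  have h1 : ellF k t ≤ Real.sin t + k^2/(2*Real.sin t) := by
    have hx : 2 * Real.sin t * (k^2/(2*Real.sin t)) = k^2 := by field_simp
    have hb : Real.sin t ^ 2 + k^2 * Real.cos t ^ 2
        ≤ (Real.sin t + k^2/(2*Real.sin t))^2 := by
      nlinarith [Real.cos_sq_le_one t, sq_nonneg (k^2/(2*Real.sin t)), sq_nonneg k]
    calc ellF k t ≤ Real.sqrt ((Real.sin t + k^2/(2*Real.sin t))^2) :=
          Real.sqrt_le_sqrt hb
      _ = Real.sin t + k^2/(2*Real.sin t) := Real.sqrt_sq (by positivity)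
  have h2 : k^2/(2*Real.sin t) ≤ k^2/2 * (1/t + 1) := by
    have := inv_sin_le ht0 ht2
    have e : k^2/(2*Real.sin t) = k^2/2 * (1/Real.sin t) := by field_simp
    rw [e]
    nlinarith [sq_nonneg k]
  linarith

-- pointwise lower bound on [k, π/2]
lemma ellF_lower {k t : ℝ} (hk : 0 < k) (ht1 : k ≤ t) (ht2 : t ≤ π/2) :
    Real.sin t + k^2/2 * (1/t) - k^2/2 * Real.sin t - (k^3*π^2/8) * (t^2)⁻¹
      ≤ ellF k t := by
  have ht0 : 0 < t := lt_of_lt_of_le hk ht1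
  have hs : 0 < Real.sin t := Real.sin_pos_of_pos_of_lt_pi ht0 (by linarith [Real.pi_pos])
  have hsk : 0 < Real.sin t + k := by linarith
  set x : ℝ := k^2 * Real.cos t ^ 2 / (2*(Real.sin t + k)) with hxdef
  have hx0 : 0 ≤ x := by positivity
  have hx : 2 * (Real.sin t + k) * x = k^2 * Real.cos t ^ 2 := by
    rw [hxdef]; field_simp
  have hx2 : x ≤ k/2 := by
    rw [hxdef, div_le_div_iff₀ (by positivity) (by norm_num)]
    nlinarith [Real.cos_sq_le_one t, sq_nonneg k]
  -- step 1 : sin t + x ≤ ellF k t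
  have step1 : Real.sin t + x ≤ ellF k t := by
    have hb : (Real.sin t + x)^2 ≤ Real.sin t ^ 2 + k^2 * Real.cos t ^ 2 := by
      nlinarith [mul_nonneg hx0 hk.le, mul_nonneg hx0 hx0]
    calc Real.sin t + x = Real.sqrt ((Real.sin t + x)^2) :=
          (Real.sqrt_sq (by positivity)).symm
      _ ≤ ellF k t := Real.sqrt_le_sqrt hb
  -- step 2 : lower bound for x
  have hpyt := Real.sin_sq_add_cos_sq t
  have e1 : Real.cos t ^ 2 / Real.sin t = 1/Real.sin t - Real.sin t := by
    field_simp
    linear_combination hpyt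
  have e2 : Real.cos t ^ 2 / Real.sin t - k/(Real.sin t)^2
      ≤ Real.cos t ^ 2 / (Real.sin t + k) := by
    rw [div_sub_div _ _ (ne_of_gt hs) (by positivity), div_le_div_iff₀ (by positivity) hsk]
    have hc1 : Real.cos t ^ 2 ≤ 1 := Real.cos_sq_le_one t
    nlinarith [mul_nonneg (mul_nonneg hk.le hs.le)
      (by nlinarith : (0:ℝ) ≤ (1 - Real.cos t ^ 2) * Real.sin t + k)]
  have e3 : 1/t ≤ 1/Real.sin t :=
    one_div_le_one_div_of_le hs (Real.sin_le ht0.le)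
  have e4 : k/(Real.sin t)^2 ≤ k * (π^2/4) * (t^2)⁻¹ := by
    have h2pi : 2/π * t ≤ Real.sin t := Real.mul_le_sin ht0.le ht2
    have hpi : (0:ℝ) < π := Real.pi_pos
    have hss : (2/π*t)^2 ≤ (Real.sin t)^2 := by
      apply pow_le_pow_left₀ (by positivity) h2pi
    have : (Real.sin t)⁻¹ ^ 2 ≤ ((2/π*t)⁻¹)^2 := by
      have := one_div_le_one_div_of_le (by positivity : (0:ℝ) < (2/π*t)^2) hss
      simpa [one_div, ← inv_pow] using this
    calc k/(Real.sin t)^2 = k * ((Real.sin t)⁻¹^2) := by rw [inv_pow]; ring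
      _ ≤ k * ((2/π*t)⁻¹)^2 := by nlinarith
      _ = k * (π^2/4) * (t^2)⁻¹ := by
          field_simp
          ring
  have step2 : k^2/2 * (1/t) - k^2/2 * Real.sin t - (k^3*π^2/8) * (t^2)⁻¹ ≤ x := by
    have hchain : 1/t - Real.sin t - k * (π^2/4) * (t^2)⁻¹
        ≤ Real.cos t ^ 2 / (Real.sin t + k) := by linarith
    have : k^2/2 * (1/t - Real.sin t - k * (π^2/4) * (t^2)⁻¹)
        ≤ k^2/2 * (Real.cos t ^ 2 / (Real.sin t + k)) := by
      apply mul_le_mul_of_nonneg_left hchain (by positivity)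
    calc k^2/2 * (1/t) - k^2/2 * Real.sin t - (k^3*π^2/8) * (t^2)⁻¹
        = k^2/2 * (1/t - Real.sin t - k * (π^2/4) * (t^2)⁻¹) := by ring
      _ ≤ k^2/2 * (Real.cos t ^ 2 / (Real.sin t + k)) := this
      _ = x := by rw [hxdef]; field_simp
  linarith

set_option maxHeartbeats 1000000 in
lemma ell_quarter_bounds {k : ℝ} (hk : 0 < k) (hk2 : k < 1/2) :
    |(∫ t in (0:ℝ)..(π/2), ellF k t) - (1 + k^2/2 * Real.log (1/k))| ≤ 4 * k^2 := by
  have hpi : (3:ℝ) < π := Real.pi_gt_three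
  have hk_half : k < π/2 := by linarith
  have h0 : (0:ℝ) ∉ Set.uIcc k (π/2) := by
    rw [Set.uIcc_of_le hk_half.le]
    simp only [Set.mem_Icc, not_and, not_le]
    intro h; linarith
  have hne : ∀ x ∈ Set.uIcc k (π/2), x ≠ 0 := fun x hx h => h0 (h ▸ hx)
  -- integrability facts
  have i1 : IntervalIntegrable Real.sin volume k (π/2) :=
    Real.continuous_sin.intervalIntegrable _ _
  have cInv : ContinuousOn (fun t : ℝ => 1/t) (Set.uIcc k (π/2)) :=
    continuousOn_const.div continuousOn_id hne
  have iInv : IntervalIntegrable (fun t : ℝ => 1/t) volume k (π/2) :=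
    cInv.intervalIntegrable
  have iOne : IntervalIntegrable (fun _ : ℝ => (1:ℝ)) volume k (π/2) :=
    intervalIntegrable_const
  have i2 : IntervalIntegrable (fun t : ℝ => k^2/2 * (1/t + 1)) volume k (π/2) :=
    (continuousOn_const.mul (cInv.add continuousOn_const)).intervalIntegrable
  have cInvSq : ContinuousOn (fun t : ℝ => (t^2)⁻¹) (Set.uIcc k (π/2)) := by
    apply ContinuousOn.inv₀ (by fun_prop)
    intro x hx
    exact pow_ne_zero 2 (hne x hx)
  have iInvSq : IntervalIntegrable (fun t : ℝ => (t^2)⁻¹) volume k (π/2) :=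
    cInvSq.intervalIntegrable
  -- exact values of elementary integrals
  have ED : ∫ t in k..(π/2), (t^2)⁻¹ = k⁻¹ - (π/2)⁻¹ := by
    have e : ∀ x : ℝ, x ^ (-2:ℤ) = (x^2)⁻¹ := fun x => by
      rw [zpow_neg]; norm_num [zpow_two, sq]
    have h := integral_zpow (a := k) (b := π/2) (n := -2) (Or.inr ⟨by norm_num, h0⟩)
    simp only [e] at h
    rw [h]
    norm_num
    ring
  have EB : ∫ t in k..(π/2), 1/t = Real.log ((π/2)/k) := integral_one_div h0
  -- upper bound on [k, π/2]
  have hu : ∫ t in k..(π/2), ellF k t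
      ≤ Real.cos k + k^2/2 * (Real.log ((π/2)/k) + (π/2 - k)) := by
    have hmono : ∫ t in k..(π/2), ellF k t
        ≤ ∫ t in k..(π/2), (Real.sin t + k^2/2 * (1/t + 1)) := by
      apply intervalIntegral.integral_mono_on hk_half.le (ellF_intg k _ _)
        (i1.add i2)
      intro t ht
      exact ellF_upper hk ht.1 ht.2
    have Eu : ∫ t in k..(π/2), (Real.sin t + k^2/2 * (1/t + 1))
        = Real.cos k + k^2/2 * (Real.log ((π/2)/k) + (π/2 - k)) := by
      rw [intervalIntegral.integral_add i1 i2, integral_sin, Real.cos_pi_div_two,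
        intervalIntegral.integral_const_mul, intervalIntegral.integral_add iInv iOne,
        EB]
      rw [intervalIntegral.integral_const, smul_eq_mul]
      ring
    linarith
  -- lower bound on [k, π/2]
  have hl : Real.cos k + k^2/2 * Real.log ((π/2)/k) - k^2/2 * Real.cos k
        - (k^3*π^2/8) * (k⁻¹ - (π/2)⁻¹)
      ≤ ∫ t in k..(π/2), ellF k t := by
    have hmono : ∫ t in k..(π/2),
          (Real.sin t + k^2/2 * (1/t) - k^2/2 * Real.sin t - (k^3*π^2/8) * (t^2)⁻¹)
        ≤ ∫ t in k..(π/2), ellF k t := by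
      apply intervalIntegral.integral_mono_on hk_half.le
        (((i1.add (iInv.const_mul _)).sub (i1.const_mul _)).sub (iInvSq.const_mul _))
        (ellF_intg k _ _)
      intro t ht
      exact ellF_lower hk ht.1 ht.2
    have El : ∫ t in k..(π/2),
          (Real.sin t + k^2/2 * (1/t) - k^2/2 * Real.sin t - (k^3*π^2/8) * (t^2)⁻¹)
        = Real.cos k + k^2/2 * Real.log ((π/2)/k) - k^2/2 * Real.cos k
          - (k^3*π^2/8) * (k⁻¹ - (π/2)⁻¹) := by
      rw [intervalIntegral.integral_sub ((i1.add (iInv.const_mul _)).sub (i1.const_mul _))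
          (iInvSq.const_mul _),
        intervalIntegral.integral_sub (i1.add (iInv.const_mul _)) (i1.const_mul _),
        intervalIntegral.integral_add i1 (iInv.const_mul _),
        intervalIntegral.integral_const_mul, intervalIntegral.integral_const_mul,
        intervalIntegral.integral_const_mul, integral_sin, Real.cos_pi_div_two, EB, ED]
      ring
    linarith
  -- the piece [0, k]
  have h0u : ∫ t in (0:ℝ)..k, ellF k t ≤ Real.sqrt 2 * k^2 := by
    have hb : ∀ t ∈ Set.Icc (0:ℝ) k, ellF k t ≤ Real.sqrt 2 * k := by
      intro t ht
      have hsn : 0 ≤ Real.sin t := Real.sin_nonneg_of_nonneg_of_le_pi ht.1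
        (by have := ht.2; linarith)
      have hst : Real.sin t ≤ t := Real.sin_le ht.1
      have hb2 : Real.sin t ^ 2 + k^2 * Real.cos t ^ 2 ≤ 2 * k^2 := by
        nlinarith [Real.cos_sq_le_one t, ht.2, ht.1]
      calc ellF k t ≤ Real.sqrt (2 * k^2) := Real.sqrt_le_sqrt hb2
        _ = Real.sqrt 2 * k := by
            rw [Real.sqrt_mul (by norm_num), Real.sqrt_sq hk.le]
    calc ∫ t in (0:ℝ)..k, ellF k t ≤ ∫ _t in (0:ℝ)..k, (Real.sqrt 2 * k) := by
          apply intervalIntegral.integral_mono_on hk.le (ellF_intg k _ _)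
            intervalIntegrable_const hb
      _ = Real.sqrt 2 * k * k := by
          rw [intervalIntegral.integral_const, smul_eq_mul]; ring
      _ = Real.sqrt 2 * k^2 := by ring
  have h0l : 0 ≤ ∫ t in (0:ℝ)..k, ellF k t := by
    apply intervalIntegral.integral_nonneg hk.le
    intro t _
    exact Real.sqrt_nonneg _
  -- combine
  have hsplit : ∫ t in (0:ℝ)..(π/2), ellF k t
      = (∫ t in (0:ℝ)..k, ellF k t) + ∫ t in k..(π/2), ellF k t :=
    (intervalIntegral.integral_add_adjacent_intervals (ellF_intg k _ _) (ellF_intg k _ _)).symm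
  -- numeric estimates
  have hlog : Real.log ((π/2)/k) = Real.log (π/2) + Real.log (1/k) := by
    rw [div_eq_mul_one_div, Real.log_mul (by positivity) (by positivity)]
  have hlog2 : 0 ≤ Real.log (π/2) := Real.log_nonneg (by linarith)
  have hlog3 : Real.log (π/2) ≤ 1 := by
    have := Real.log_le_sub_one_of_pos (show (0:ℝ) < π/2 by linarith)
    have : π < 4 := Real.pi_lt_d2.trans (by norm_num)
    linarith [Real.log_le_sub_one_of_pos (show (0:ℝ) < π/2 by linarith)]
  have hcos1 : Real.cos k ≤ 1 := Real.cos_le_one k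
  have hcos2 : 1 - k^2/2 ≤ Real.cos k := Real.one_sub_sq_div_two_le_cos
  have hsqrt2 : Real.sqrt 2 ≤ 2 := by
    nlinarith [Real.sq_sqrt (by norm_num : (0:ℝ) ≤ 2), Real.sqrt_nonneg 2]
  have hpi4 : π < 4 := Real.pi_lt_d2.trans (by norm_num)
  have hinvk : (k^3*π^2/8) * (k⁻¹ - (π/2)⁻¹) ≤ 2 * k^2 := by
    have h1 : k^3 * k⁻¹ = k^2 := by field_simp
    have h2 : 0 ≤ (π/2)⁻¹ := by positivity
    have : (k^3*π^2/8) * (k⁻¹ - (π/2)⁻¹) ≤ (k^3*π^2/8) * k⁻¹ := by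
      apply mul_le_mul_of_nonneg_left _ (by positivity)
      linarith
    calc (k^3*π^2/8) * (k⁻¹ - (π/2)⁻¹) ≤ (k^3*π^2/8) * k⁻¹ := this
      _ = (π^2/8) * k^2 := by field_simp
      _ ≤ 2 * k^2 := by
          have hpp : (0:ℝ) < π := Real.pi_pos
          nlinarith [sq_nonneg k, mul_pos (show (0:ℝ) < 4 - π by linarith)
            (show (0:ℝ) < 4 + π by linarith)]
  rw [hsplit, abs_le]
  constructor
  · have : 0 ≤ k^2/2 * Real.log (π/2) := by positivity
    nlinarith [sq_nonneg k]
  · have h1 : k^2/2 * Real.log ((π/2)/k) ≤ k^2/2 * Real.log (1/k) + k^2/2 := by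
      rw [hlog]; nlinarith [sq_nonneg k]
    nlinarith [sq_nonneg k, hk.le]

lemma per_bound {k : ℝ} (hk : 0 < k) (hk2 : k < 1/2) :
    |(∫ t in (0 : ℝ)..(2 * π), Real.sqrt (Real.sin t ^ 2 + k ^ 2 * Real.cos t ^ 2)) -
      (4 + 2 * k ^ 2 * Real.log (1 / k))| ≤ 16 * k ^ 2 := by
  have h := ell_quarter_bounds hk hk2
  have e : (∫ t in (0 : ℝ)..(2 * π), Real.sqrt (Real.sin t ^ 2 + k ^ 2 * Real.cos t ^ 2))
      = 4 * ∫ t in (0:ℝ)..(π/2), ellF k t := ellF_sym k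
  rw [e, show 4 * (∫ t in (0:ℝ)..(π/2), ellF k t) - (4 + 2 * k ^ 2 * Real.log (1 / k))
    = 4 * ((∫ t in (0:ℝ)..(π/2), ellF k t) - (1 + k^2/2 * Real.log (1/k))) by ring,
    abs_mul]
  rw [show |(4:ℝ)| = 4 by norm_num]
  linarith

theorem stmt18 :
    (∃ C > (0 : ℝ), ∃ k₁ > (0 : ℝ), ∀ k : ℝ, 0 < k → k < k₁ →
      |(∫ t in (0 : ℝ)..(2 * π), Real.sqrt (Real.sin t ^ 2 + k ^ 2 * Real.cos t ^ 2)) -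
        (4 + 2 * k ^ 2 * Real.log (1 / k))| ≤ C * k ^ 2) ∧
    (∀ C > (0 : ℝ), ∃ k₀ > (0 : ℝ), ∀ k : ℝ, 0 < k → k < k₀ →
      4 + k ^ 2 * Real.log (1 / k) ≤
        ∫ t in (0 : ℝ)..(2 * π), Real.sqrt (Real.sin t ^ 2 + k ^ 2 * Real.cos t ^ 2)) := by
  constructor
  · exact ⟨16, by norm_num, 1/2, by norm_num, fun k hk hk2 => per_bound hk hk2⟩
  · intro C _
    refine ⟨min (1/2) (Real.exp (-16)), lt_min (by norm_num) (Real.exp_pos _), ?_⟩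
    intro k hk hk0
    have hk2 : k < 1/2 := hk0.trans_le (min_le_left _ _)
    have hke : k < Real.exp (-16) := hk0.trans_le (min_le_right _ _)
    have hlog : (16:ℝ) ≤ Real.log (1/k) := by
      have := Real.log_lt_log hk hke
      rw [Real.log_exp] at this
      rw [one_div, Real.log_inv]
      linarith
    have h := per_bound hk hk2
    rw [abs_le] at h
    nlinarith [sq_nonneg k, h.1]
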